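/- Sub-critical remainder R₁ vanishes: under the assumptions of the sub-critical CLT ((F), (H2) with α ∈ (0,1/√2), and 𝔣 = (f_ℓ) satisfying (H2) uniformly), for any nondecreasing sequence (p_n) of positive integers with p_n < n, p_n/n → 1 and n − p_n − λ log n → ∞ for all λ > 0, the quantity R₁(n) = |𝔾_n|^{-1/2} ∑_{ℓ=0}^{p_n} 2^{p_n-ℓ} M_{𝔾_{n-p_n}}(𝒬^{p_n-ℓ} f̃_ℓ) (which equals ∑_{i∈𝔾_{n-p_n}} E[N_{n,i}(𝔣) | X_i], where N_{n,i}(𝔣) = |𝔾_n|^{-1/2} ∑_{ℓ=0}^{n-|i|} M_{i𝔾_{n-|i|-ℓ}}(f̃_ℓ)) satisfies lim_{n→∞} E[R₁(n)²] = 0. -/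

import Mathlib

set_option linter.unusedSectionVars false
set_option maxHeartbeats 1000000


open MeasureTheory ProbabilityTheory Filter Finset
open scoped NNReal Topology

noncomputable section

namespace BMC

variable {S : Type*} [MeasurableSpace S] {Ω : Type*} [MeasurableSpace Ω]

/-- The `n`-th generation `𝔾_n` of the binary tree, as a finset of `List Bool`. -/
def gen (n : ℕ) : Finset (List Bool) :=
  (Finset.univ : Finset (Fin n → Bool)).image List.ofFn

/-- The tree `𝕋_n` up to generation `n`. -/
def treeUpTo (n : ℕ) : Finset (List Bool) :=
  (Finset.range (n + 1)).biUnion gen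

/-- The descendants `i𝔾_m` of `i` that are `m` generations below `i`. -/
def desc (i : List Bool) (m : ℕ) : Finset (List Bool) :=
  (gen m).image fun j => i ++ j

/-- `M_A(f) = ∑_{i ∈ A} f(X_i)`. -/
def MA (X : List Bool → Ω → S) (A : Finset (List Bool)) (f : S → ℝ) (ω : Ω) : ℝ :=
  ∑ i ∈ A, f (X i ω)

/-- Complex-valued version of `M_A(f)`. -/
def MAC (X : List Bool → Ω → S) (A : Finset (List Bool)) (f : S → ℂ) (ω : Ω) : ℂ :=
  ∑ i ∈ A, f (X i ω)

/-- `𝒫(f ⊗ g)(x) = ∫ f(y) g(z) 𝒫(x, dy, dz)`. -/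
def Ptens (P : Kernel S (S × S)) (f g : S → ℝ) (x : S) : ℝ :=
  ∫ p, f p.1 * g p.2 ∂(P x)

/-- `𝒫(f ⊗_sym g)(x) = ∫ (f(y) g(z) + g(y) f(z))/2 𝒫(x, dy, dz)`. -/
def PtensSym (P : Kernel S (S × S)) (f g : S → ℝ) (x : S) : ℝ :=
  ∫ p, (f p.1 * g p.2 + g p.1 * f p.2) / 2 ∂(P x)

/-- Complex version of `𝒫(f ⊗_sym g)`. -/
def PtensSymC (P : Kernel S (S × S)) (f g : S → ℂ) (x : S) : ℂ :=
  ∫ p, (f p.1 * g p.2 + g p.1 * f p.2) / 2 ∂(P x)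

/-- The operator `𝒬 f (x) = ∫ (f(y)+f(z))/2 𝒫(x, dy, dz)`, i.e. the action of the
Markov kernel `𝒬 = (P₀ + P₁)/2` on functions. -/
def Qop (P : Kernel S (S × S)) (f : S → ℝ) (x : S) : ℝ :=
  ∫ p, (f p.1 + f p.2) / 2 ∂(P x)

/-- The iterated operator `𝒬ⁿ`. -/
def Qiter (P : Kernel S (S × S)) (n : ℕ) (f : S → ℝ) : S → ℝ := (Qop P)^[n] f

/-- Complex version of `𝒬`. -/
def QopC (P : Kernel S (S × S)) (f : S → ℂ) (x : S) : ℂ :=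
  ∫ p, (f p.1 + f p.2) / 2 ∂(P x)

/-- Complex version of `𝒬ⁿ`. -/
def QiterC (P : Kernel S (S × S)) (n : ℕ) (f : S → ℂ) : S → ℂ := (QopC P)^[n] f

/-- `⟨μ, f⟩ = ∫ f dμ`. -/
def mInt (μ : Measure S) (f : S → ℝ) : ℝ := ∫ x, f x ∂μ

/-- Complex `⟨μ, f⟩`. -/
def mIntC (μ : Measure S) (f : S → ℂ) : ℂ := ∫ x, f x ∂μ

/-- `f̃ = f - ⟨μ, f⟩`. -/
def ctr (μ : Measure S) (f : S → ℝ) (x : S) : ℝ := f x - mInt μ f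

/-- Coercion of a real function to a complex one. -/
def cf (f : S → ℝ) : S → ℂ := fun x => (f x : ℂ)

/-- The σ-field `ℋ_n = σ(X_j, j ∈ 𝕋_n)`. -/
def sigmaTree (X : List Bool → Ω → S) (n : ℕ) : MeasurableSpace Ω :=
  ⨆ j ∈ treeUpTo n, MeasurableSpace.comap (X j) inferInstance

lemma treeUpTo_mono {a b : ℕ} (h : a ≤ b) : treeUpTo a ⊆ treeUpTo b := by
  intro i hi
  simp only [treeUpTo, Finset.mem_biUnion, Finset.mem_range] at hi ⊢
  obtain ⟨r, hr, hir⟩ := hi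
  exact ⟨r, lt_of_lt_of_le hr (by omega), hir⟩

/-- The filtration `(ℋ_n = σ(X_i, i ∈ 𝕋_n))_{n ∈ ℕ}`. -/
def natFiltration (X : List Bool → Ω → S) (hX : ∀ i, Measurable (X i)) :
    Filtration ℕ (inferInstance : MeasurableSpace Ω) where
  seq n := sigmaTree X n
  mono' := by
    intro a b hab
    exact biSup_mono fun j hj => treeUpTo_mono hab hj
  le' n := by
    refine iSup₂_le fun j _ => ?_
    exact (hX j).comap_le

/-- `X = (X_i, i ∈ 𝕋)` is a bifurcating Markov chain on `(S, 𝒮)` with initial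
distribution `ν` and probability kernel `𝒫`, under the probability measure `m` on `Ω`. -/
structure IsBMC (P : Kernel S (S × S)) (ν : Measure S) (m : Measure Ω)
    (X : List Bool → Ω → S) : Prop where
  meas : ∀ i, Measurable (X i)
  init : m.map (X []) = ν
  branching : ∀ (n : ℕ) (g : List Bool → S → S × S → ℝ),
    (∀ i, Measurable fun q : S × S × S => g i q.1 q.2) →
    (∀ i, ∃ C, ∀ x p, |g i x p| ≤ C) →
    (m[fun ω => ∏ i ∈ gen n, g i (X i ω) (X (i ++ [false]) ω, X (i ++ [true]) ω)
        | sigmaTree X n]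
      =ᵐ[m] fun ω => ∏ i ∈ gen n, ∫ p, g i (X i ω) p ∂(P (X i ω)))

/-- Structural Assumption (F) on the set of functions `F`. -/
structure AssumpF (P : Kernel S (S × S)) (ν : Measure S) (F : Set (S → ℝ)) : Prop where
  meas : ∀ f ∈ F, Measurable f
  add_mem : ∀ f ∈ F, ∀ g ∈ F, f + g ∈ F
  smul_mem : ∀ (c : ℝ), ∀ f ∈ F, c • f ∈ F
  const_mem : ∀ c : ℝ, (fun _ : S => c) ∈ F
  sq_mem : ∀ f ∈ F, (fun x => f x ^ 2) ∈ F
  int_nu : ∀ f ∈ F, Integrable f ν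
  tens_int : ∀ f₀ ∈ F, ∀ f₁ ∈ F, ∀ x : S,
    Integrable (fun p : S × S => f₀ p.1 * f₁ p.2) (P x)
  tens_mem : ∀ f₀ ∈ F, ∀ f₁ ∈ F, Ptens P f₀ f₁ ∈ F

/-- Geometric ergodicity Assumption (H2) with rate `α`. -/
structure AssumpH2 (P : Kernel S (S × S)) (F : Set (S → ℝ)) (μ : Measure S) (α : ℝ) :
    Prop where
  prob : IsProbabilityMeasure μ
  int_mu : ∀ f ∈ F, Integrable f μ
  erg : ∀ f ∈ F, ∃ g ∈ F, ∀ (n : ℕ) (x : S), |Qiter P n f x - mInt μ f| ≤ α ^ n * g x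

/-- A sequence `𝔣` satisfies Assumption (H2) uniformly, with dominating function `g`. -/
def UnifH2 (P : Kernel S (S × S)) (μ : Measure S) (α : ℝ) (𝔣 : ℕ → S → ℝ) (g : S → ℝ) :
    Prop :=
  ∀ (n ℓ : ℕ) (x : S), |Qiter P n (𝔣 ℓ) x| ≤ g x ∧
    |Qiter P n (𝔣 ℓ) x - mInt μ (𝔣 ℓ)| ≤ α ^ n * g x

/-- `N_{n,∅}(𝔣) = |𝔾_n|^{-1/2} ∑_{ℓ=0}^n M_{𝔾_{n-ℓ}}(f̃_ℓ)`. -/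
def Nroot (μ : Measure S) (X : List Bool → Ω → S) (𝔣 : ℕ → S → ℝ) (n : ℕ) (ω : Ω) : ℝ :=
  (Real.sqrt (2 ^ n))⁻¹ * ∑ ℓ ∈ Finset.range (n + 1), MA X (gen (n - ℓ)) (ctr μ (𝔣 ℓ)) ω

/-- `N_{n,i}(𝔣) = |𝔾_n|^{-1/2} ∑_{ℓ=0}^{n-|i|} M_{i𝔾_{n-|i|-ℓ}}(f̃_ℓ)`. -/
def Nni (μ : Measure S) (X : List Bool → Ω → S) (𝔣 : ℕ → S → ℝ) (n : ℕ) (i : List Bool)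
    (ω : Ω) : ℝ :=
  (Real.sqrt (2 ^ n))⁻¹ *
    ∑ ℓ ∈ Finset.range (n - i.length + 1), MA X (desc i (n - i.length - ℓ)) (ctr μ (𝔣 ℓ)) ω

/-- Convergence in distribution to a centered Gaussian with variance `v`, expressed by
convergence of integrals of bounded continuous test functions. -/
def TendstoGauss (m : Measure Ω) (Y : ℕ → Ω → ℝ) (v : ℝ≥0) : Prop :=
  ∀ φ : BoundedContinuousFunction ℝ ℝ,
    Tendsto (fun n => ∫ ω, φ (Y n ω) ∂m) atTop (𝓝 (∫ x, φ x ∂(gaussianReal 0 v)))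

/-- Assumption (H3): a second spectral gap, with rate `α`, eigenvalues `(αj j)_{j ∈ J}`
of modulus `α`, projectors `R j`, and speed `β`. -/
structure AssumpH3 (P : Kernel S (S × S)) (F : Set (S → ℝ)) (μ : Measure S) (α : ℝ)
    {J : Type*} [Fintype J] [DecidableEq J] (αj : J → ℂ) (R : J → (S → ℂ) → S → ℂ) (β : ℕ → ℝ) :
    Prop where
  prob : IsProbabilityMeasure μ
  int_mu : ∀ f ∈ F, Integrable f μ
  nonempty : Nonempty J
  inj : Function.Injective αj
  abs_eq : ∀ j, Norm.norm (αj j) = α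
  Rlin : ∀ (j : J) (c : ℂ) (f g : S → ℂ),
    R j (fun x => c * f x + g x) = fun x => c * R j f x + R j g x
  Rorth : ∀ (j j' : J) (f : S → ℂ), R j (R j' f) = if j = j' then R j f else fun _ => 0
  Rne : ∀ j : J, ∃ f ∈ F, R j (cf f) ≠ fun _ => 0
  Rmeas : ∀ (j : J) (f : S → ℂ), Measurable f → Measurable (R j f)
  Reig : ∀ (j : J) (f : S → ℂ), QopC P (R j f) = fun x => αj j * R j f x
  βpos : ∀ n, 0 < β n
  βle : ∀ n, β n ≤ 1
  βanti : Antitone β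
  βlim : Tendsto β atTop (𝓝 0)
  erg : ∀ f ∈ F, ∃ g ∈ F, ∀ (n : ℕ) (x : S),
    Norm.norm (QiterC P n (cf f) x - (mInt μ f : ℂ)
      - (α : ℂ) ^ n * ∑ j, (αj j / (α : ℂ)) ^ n * R j (cf f) x) ≤ β n * α ^ n * g x

/-- `f̂ = f̃ - ∑_{j ∈ J} ℛ_j(f)`, as a complex-valued function. -/
def fhat {J : Type*} [Fintype J] (μ : Measure S) (R : J → (S → ℂ) → S → ℂ)
    (f : S → ℝ) : S → ℂ :=
  fun x => (ctr μ f x : ℂ) - ∑ j, R j (cf f) x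

/-- A sequence `𝔣` satisfies Assumption (H3) uniformly, with dominating function `g`. -/
def UnifH3 {J : Type*} [Fintype J] (P : Kernel S (S × S)) (μ : Measure S) (α : ℝ)
    (R : J → (S → ℂ) → S → ℂ) (β : ℕ → ℝ) (𝔣 : ℕ → S → ℝ) (g : S → ℝ) : Prop :=
  ∀ (n ℓ : ℕ) (x : S),
    Norm.norm (QiterC P n (cf (𝔣 ℓ)) x) ≤ g x ∧
    Norm.norm (QiterC P n (cf (ctr μ (𝔣 ℓ))) x) ≤ α ^ n * g x ∧
    Norm.norm (QiterC P n (fhat μ R (𝔣 ℓ)) x) ≤ β n * α ^ n * g x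

/-- `𝒫 f*_{k,ℓ}(x) = ∑_{j ∈ J} θ_j^{ℓ-k} 𝒫(ℛ_j(f_k) ⊗_sym ℛ̄_j(f_ℓ))(x)`, where
`ℛ̄_j(f) = conj (ℛ_j f)` for real `f`. -/
def Pfstar {J : Type*} [Fintype J] (P : Kernel S (S × S)) (α : ℝ) (αj : J → ℂ)
    (R : J → (S → ℂ) → S → ℂ) (𝔣 : ℕ → S → ℝ) (k ℓ : ℕ) (x : S) : ℂ :=
  ∑ j, (αj j / (α : ℂ)) ^ ((ℓ : ℤ) - (k : ℤ)) *
    PtensSymC P (R j (cf (𝔣 k))) (fun y => starRingEnd ℂ (R j (cf (𝔣 ℓ)) y)) x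


section Helpers

lemma mem_gen {i : List Bool} {n : ℕ} : i ∈ gen n ↔ i.length = n := by
  constructor
  · intro hi
    simp only [gen, Finset.mem_image] at hi
    obtain ⟨f, -, rfl⟩ := hi
    simp
  · intro hi
    simp only [gen, Finset.mem_image]
    refine ⟨fun k => i.get (Fin.cast hi.symm k), Finset.mem_univ _, ?_⟩
    subst hi
    simp [List.ofFn_getElem]

lemma card_gen_le (n : ℕ) : (gen n).card ≤ 2 ^ n := by
  refine (Finset.card_image_le).trans ?_
  simp [Finset.card_univ]

lemma gen_zero : gen 0 = {[]} := by
  ext i; simp [mem_gen, List.length_eq_zero_iff]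

lemma gen_succ (n : ℕ) :
    gen (n + 1) = (gen n).biUnion (fun i => {i ++ [false], i ++ [true]}) := by
  ext i
  simp only [mem_gen, Finset.mem_biUnion, Finset.mem_insert, Finset.mem_singleton]
  constructor
  · intro hi
    have hne : i ≠ [] := by intro h; simp [h] at hi
    refine ⟨i.dropLast, ?_, ?_⟩
    · simp [List.length_dropLast, hi]
    · have hd := List.dropLast_append_getLast hne
      cases hb : i.getLast hne
      · left; rw [hb] at hd; exact hd.symm
      · right; rw [hb] at hd; exact hd.symm
  · rintro ⟨j, hj, rfl | rfl⟩ <;> simp [hj]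

lemma pairwise_disj (n : ℕ) : Set.PairwiseDisjoint ↑(gen n)
    (fun i : List Bool => ({i ++ [false], i ++ [true]} : Finset (List Bool))) := by
  intro a _ b _ hab
  refine Finset.disjoint_left.2 ?_
  intro x hx hx'
  simp only [Finset.mem_insert, Finset.mem_singleton] at hx hx'
  apply hab
  rcases hx with rfl | rfl <;> rcases hx' with h | h <;>
    exact (List.append_inj_left' h rfl)

variable {P : Kernel S (S × S)} [IsMarkovKernel P] {ν : Measure S} {F : Set (S → ℝ)}

lemma measurable_Qop {h : S → ℝ} (hh : Measurable h) : Measurable (Qop P h) := by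
  have : StronglyMeasurable fun z : S × (S × S) => (h z.2.1 + h z.2.2) / 2 :=
    (((hh.comp (measurable_fst.comp measurable_snd)).add
      (hh.comp (measurable_snd.comp measurable_snd))).div_const 2).stronglyMeasurable
  exact (this.integral_kernel_prod_right' (κ := P)).measurable

lemma Qop_bound {h : S → ℝ} {C : ℝ} (hC : ∀ x, |h x| ≤ C) (x : S) : |Qop P h x| ≤ C := by
  have := norm_integral_le_of_norm_le_const (μ := P x)
    (f := fun p : S × S => (h p.1 + h p.2) / 2) (C := C) ?_
  · simpa [Qop] using this
  · filter_upwards with p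
    rw [Real.norm_eq_abs, abs_div, abs_two]
    have := abs_add_le (h p.1) (h p.2)
    have := hC p.1; have := hC p.2
    linarith

omit [IsMarkovKernel P] in
lemma Qop_nonneg {h : S → ℝ} (h0 : ∀ x, 0 ≤ h x) (x : S) : 0 ≤ Qop P h x :=
  integral_nonneg fun p => by have := h0 p.1; have := h0 p.2; dsimp; linarith

omit [IsMarkovKernel P] in
lemma integrable_pair (hF : AssumpF P ν F) {f : S → ℝ} (hf : f ∈ F) (x : S) :
    Integrable (fun p : S × S => (f p.1 + f p.2) / 2) (P x) := by
  have h1 := hF.tens_int f hf (fun _ => 1) (hF.const_mem 1) x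
  have h2 := hF.tens_int (fun _ => 1) (hF.const_mem 1) f hf x
  simp only [mul_one, one_mul] at h1 h2
  exact (h1.add h2).div_const 2

omit [IsMarkovKernel P] in
lemma Qop_mem (hF : AssumpF P ν F) {f : S → ℝ} (hf : f ∈ F) : Qop P f ∈ F := by
  have he : Qop P f =
      (2:ℝ)⁻¹ • (Ptens P f (fun _ => 1) + Ptens P (fun _ => 1) f) := by
    funext x
    have h1 := hF.tens_int f hf (fun _ => 1) (hF.const_mem 1) x
    have h2 := hF.tens_int (fun _ => 1) (hF.const_mem 1) f hf x
    simp only [mul_one, one_mul] at h1 h2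
    simp only [Qop, Ptens, Pi.smul_apply, Pi.add_apply, smul_eq_mul, mul_one, one_mul]
    rw [integral_div, integral_add h1 h2]
    ring
  rw [he]
  exact hF.smul_mem _ _ (hF.add_mem _ (hF.tens_mem f hf _ (hF.const_mem 1)) _
    (hF.tens_mem _ (hF.const_mem 1) f hf))

omit [IsMarkovKernel P] in
lemma Qiter_mem (hF : AssumpF P ν F) {f : S → ℝ} (hf : f ∈ F) (q : ℕ) :
    Qiter P q f ∈ F := by
  induction q with
  | zero => exact hf
  | succ q ih =>
    rw [Qiter, Function.iterate_succ_apply']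
    exact Qop_mem hF ih

omit [IsMarkovKernel P] in
lemma ctr_mem (hF : AssumpF P ν F) {μ : Measure S} {f : S → ℝ} (hf : f ∈ F) :
    ctr μ f ∈ F := by
  have : ctr μ f = f + (fun _ => -(mInt μ f)) := by
    funext x; simp [ctr]; ring
  rw [this]
  exact hF.add_mem f hf _ (hF.const_mem _)

lemma Qop_sub_const (hF : AssumpF P ν F) {f : S → ℝ} (hf : f ∈ F) (c : ℝ) :
    Qop P (fun x => f x - c) = fun x => Qop P f x - c := by
  funext x
  have h1 : (fun p : S × S => (((f p.1 - c) + (f p.2 - c)) / 2))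
      = fun p : S × S => (f p.1 + f p.2) / 2 - c := by funext p; ring
  rw [Qop, h1, integral_sub (integrable_pair hF hf x) (integrable_const c)]
  simp [Qop]

lemma Qiter_ctr (hF : AssumpF P ν F) {μ : Measure S} {f : S → ℝ} (hf : f ∈ F) (q : ℕ) :
    Qiter P q (ctr μ f) = fun x => Qiter P q f x - mInt μ f := by
  induction q with
  | zero => funext x; simp [Qiter, ctr]
  | succ q ih =>
    have e : ∀ w : S → ℝ, Qiter P (q+1) w = Qop P (Qiter P q w) := fun w =>
      Function.iterate_succ_apply' _ _ _
    rw [e, e, ih, Qop_sub_const hF (Qiter_mem hF hf q)]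

omit [IsMarkovKernel P] in
lemma sandwich (hF : AssumpF P ν F) {u v : S → ℝ} (h0 : ∀ x, 0 ≤ u x)
    (huv : ∀ x, u x ≤ v x) (hv : v ∈ F) (q : ℕ) :
    (∀ x, 0 ≤ Qiter P q u x) ∧ (∀ x, Qiter P q u x ≤ Qiter P q v x) := by
  induction q with
  | zero => exact ⟨h0, huv⟩
  | succ q ih =>
    obtain ⟨ih0, ihle⟩ := ih
    have e1 : Qiter P (q+1) u = Qop P (Qiter P q u) := Function.iterate_succ_apply' _ _ _
    have e2 : Qiter P (q+1) v = Qop P (Qiter P q v) := Function.iterate_succ_apply' _ _ _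
    rw [e1, e2]
    refine ⟨Qop_nonneg ih0, fun x => ?_⟩
    refine integral_mono_of_nonneg (Eventually.of_forall fun p => by
        have := ih0 p.1; have := ih0 p.2; dsimp; linarith)
      (integrable_pair hF (Qiter_mem hF hv q) x) (Eventually.of_forall fun p => ?_)
    have := ihle p.1; have := ihle p.2; dsimp; linarith

variable {m : Measure Ω} [IsProbabilityMeasure m] {X : List Bool → Ω → S}

omit [IsMarkovKernel P] in
lemma integrable_comp (hBMC : IsBMC P ν m X) {u : S → ℝ} (hu : Measurable u) {C : ℝ}
    (hC : ∀ x, |u x| ≤ C) (i : List Bool) :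
    Integrable (fun ω => u (X i ω)) m := by
  refine Integrable.mono' (integrable_const C)
    ((hu.comp (hBMC.meas i)).aestronglyMeasurable) ?_
  filter_upwards with ω
  rw [Real.norm_eq_abs]; exact hC _

omit [IsMarkovKernel P] [IsProbabilityMeasure m] in
lemma sigmaTree_le (hBMC : IsBMC P ν m X) (n : ℕ) :
    sigmaTree X n ≤ (inferInstance : MeasurableSpace Ω) :=
  iSup₂_le fun j _ => (hBMC.meas j).comap_le

lemma step_one (hBMC : IsBMC P ν m X) {h : S → ℝ} (hh : Measurable h) {C : ℝ}
    (hC : ∀ x, |h x| ≤ C) {n : ℕ} {i : List Bool} (hi : i ∈ gen n) :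
    ∫ ω, (h (X (i ++ [false]) ω) + h (X (i ++ [true]) ω)) ∂m
      = ∫ ω, 2 * Qop P h (X i ω) ∂m := by
  classical
  set g : List Bool → S → S × S → ℝ :=
    fun j => if j = i then (fun _ p => h p.1 + h p.2) else fun _ _ => 1 with hg
  have hgmeas : ∀ j, Measurable fun q : S × S × S => g j q.1 q.2 := by
    intro j
    by_cases hj : j = i <;> simp only [hg, hj, if_true, if_false, ite_true, ite_false]
    · exact (hh.comp (measurable_fst.comp measurable_snd)).add
        (hh.comp (measurable_snd.comp measurable_snd))
    · exact measurable_const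
  have hgbd : ∀ j, ∃ C', ∀ x p, |g j x p| ≤ C' := by
    intro j
    by_cases hj : j = i
    · refine ⟨C + C, fun x p => ?_⟩
      simp only [hg, hj, if_true, ite_true]
      exact (abs_add_le _ _).trans (add_le_add (hC _) (hC _))
    · exact ⟨1, fun x p => by simp [hg, hj]⟩
  have hbr := hBMC.branching n g hgmeas hgbd
  have hm_le := sigmaTree_le hBMC n
  haveI : SigmaFinite (m.trim hm_le) := by
    haveI : IsFiniteMeasure (m.trim hm_le) := isFiniteMeasure_trim hm_le
    infer_instance
  have hprod : (fun ω => ∏ j ∈ gen n, g j (X j ω) (X (j ++ [false]) ω, X (j ++ [true]) ω))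
      = fun ω => h (X (i ++ [false]) ω) + h (X (i ++ [true]) ω) := by
    funext ω
    rw [Finset.prod_eq_single_of_mem i hi (fun j _ hj => by simp [hg, hj])]
    simp [hg]
  have hprod2 : (fun ω => ∏ j ∈ gen n, ∫ p, g j (X j ω) p ∂(P (X j ω)))
      = fun ω => 2 * Qop P h (X i ω) := by
    funext ω
    rw [Finset.prod_eq_single_of_mem i hi (fun j _ hj => by simp [hg, hj])]
    simp only [hg, if_true, ite_true]
    rw [Qop, integral_div]
    ring
  rw [← hprod, ← hprod2, ← integral_condExp hm_le, integral_congr_ae hbr]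

lemma expectation_gen (hBMC : IsBMC P ν m X) (q : ℕ) {h : S → ℝ} {C : ℝ}
    (hh : Measurable h) (hC : ∀ x, |h x| ≤ C) :
    ∫ ω, ∑ i ∈ gen q, h (X i ω) ∂m = 2 ^ q * ∫ x, Qiter P q h x ∂ν := by
  induction q generalizing h C with
  | zero =>
    rw [gen_zero]
    simp only [Finset.sum_singleton, pow_zero, one_mul]
    simp only [Qiter, Function.iterate_zero, id_eq]
    rw [← hBMC.init, integral_map (hBMC.meas []).aemeasurable hh.aestronglyMeasurable]
  | succ q ih =>
    have hsum : ∀ ω, ∑ i ∈ gen (q+1), h (X i ω)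
        = ∑ i ∈ gen q, (h (X (i ++ [false]) ω) + h (X (i ++ [true]) ω)) := by
      intro ω
      rw [gen_succ, Finset.sum_biUnion (pairwise_disj q)]
      refine Finset.sum_congr rfl fun i _ => ?_
      rw [Finset.sum_insert (by simp), Finset.sum_singleton]
    calc ∫ ω, ∑ i ∈ gen (q+1), h (X i ω) ∂m
        = ∫ ω, ∑ i ∈ gen q, (h (X (i ++ [false]) ω) + h (X (i ++ [true]) ω)) ∂m := by
          simp_rw [hsum]
      _ = ∑ i ∈ gen q, ∫ ω, (h (X (i ++ [false]) ω) + h (X (i ++ [true]) ω)) ∂m :=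
          integral_finset_sum _ fun i _ =>
            (integrable_comp hBMC hh hC _).add (integrable_comp hBMC hh hC _)
      _ = ∑ i ∈ gen q, ∫ ω, 2 * Qop P h (X i ω) ∂m :=
          Finset.sum_congr rfl fun i hi => step_one hBMC hh hC hi
      _ = ∫ ω, ∑ i ∈ gen q, 2 * Qop P h (X i ω) ∂m :=
          (integral_finset_sum _ fun i _ =>
            (integrable_comp hBMC (measurable_Qop hh) (Qop_bound hC) i).const_mul 2).symm
      _ = 2 * ∫ ω, ∑ i ∈ gen q, Qop P h (X i ω) ∂m := by
          simp_rw [← Finset.mul_sum]; exact integral_const_mul 2 _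
      _ = 2 * (2 ^ q * ∫ x, Qiter P q (Qop P h) x ∂ν) := by
          rw [ih (measurable_Qop hh) (Qop_bound hC)]
      _ = 2 ^ (q+1) * ∫ x, Qiter P (q+1) h x ∂ν := by
          rw [show Qiter P (q+1) h = Qiter P q (Qop P h) from Function.iterate_succ_apply _ _ _]
          ring

lemma lintegral_gen_le (hBMC : IsBMC P ν m X) (hF : AssumpF P ν F) {h : S → ℝ}
    (hhF : h ∈ F) (h0 : ∀ x, 0 ≤ h x) (q : ℕ) :
    ∫⁻ ω, ENNReal.ofReal (∑ i ∈ gen q, h (X i ω)) ∂m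
      ≤ ENNReal.ofReal (2 ^ q * ∫ x, Qiter P q h x ∂ν) := by
  have hhm : Measurable h := hF.meas h hhF
  set hk : ℕ → S → ℝ := fun k x => min (h x) k with hhk
  have hkmeas : ∀ k, Measurable (hk k) := fun k => hhm.min measurable_const
  have hkbd : ∀ k : ℕ, ∀ x, |hk k x| ≤ (k : ℝ) := by
    intro k x
    rw [abs_le]
    exact ⟨le_trans (neg_nonpos.mpr (Nat.cast_nonneg k)) (le_min (h0 x) (Nat.cast_nonneg k)),
      min_le_right _ _⟩
  have hk0 : ∀ k : ℕ, ∀ x, 0 ≤ hk k x := fun k x => le_min (h0 x) (Nat.cast_nonneg k)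
  have hkle : ∀ k : ℕ, ∀ x, hk k x ≤ h x := fun k x => min_le_left _ _
  have hsup : ∀ ω, (⨆ k : ℕ, ENNReal.ofReal (∑ i ∈ gen q, hk k (X i ω)))
      = ENNReal.ofReal (∑ i ∈ gen q, h (X i ω)) := by
    intro ω
    have hmono : Monotone fun k : ℕ => ∑ i ∈ gen q, hk k (X i ω) := by
      intro k k' hkk'
      exact Finset.sum_le_sum fun i _ =>
        min_le_min le_rfl (Nat.cast_le.2 hkk')
    have htend : Tendsto (fun k : ℕ => ∑ i ∈ gen q, hk k (X i ω)) atTop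
        (𝓝 (∑ i ∈ gen q, h (X i ω))) := by
      refine tendsto_finset_sum _ fun i _ => ?_
      refine Tendsto.congr' ?_ (tendsto_const_nhds (x := h (X i ω)))
      filter_upwards [eventually_ge_atTop ⌈h (X i ω)⌉₊] with k hkk
      exact (min_eq_left ((Nat.le_ceil _).trans (Nat.cast_le.2 hkk))).symm
    exact tendsto_nhds_unique
      (tendsto_atTop_iSup fun k k' hkk' => ENNReal.ofReal_le_ofReal (hmono hkk'))
      ((ENNReal.continuous_ofReal.tendsto _).comp htend)
  calc ∫⁻ ω, ENNReal.ofReal (∑ i ∈ gen q, h (X i ω)) ∂m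
      = ∫⁻ ω, ⨆ k : ℕ, ENNReal.ofReal (∑ i ∈ gen q, hk k (X i ω)) ∂m :=
        lintegral_congr fun ω => (hsup ω).symm
    _ = ⨆ k : ℕ, ∫⁻ ω, ENNReal.ofReal (∑ i ∈ gen q, hk k (X i ω)) ∂m := by
        refine lintegral_iSup (fun k => ?_) (fun k k' hkk' ω => ?_)
        · exact (Finset.measurable_sum _ fun i _ =>
            (hkmeas k).comp (hBMC.meas i)).ennreal_ofReal
        · exact ENNReal.ofReal_le_ofReal (Finset.sum_le_sum fun i _ =>
            min_le_min le_rfl (Nat.cast_le.2 hkk'))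
    _ ≤ ENNReal.ofReal (2 ^ q * ∫ x, Qiter P q h x ∂ν) := by
        refine iSup_le fun k => ?_
        rw [← ofReal_integral_eq_lintegral_ofReal
          (integrable_finset_sum _ fun i _ => integrable_comp hBMC (hkmeas k) (hkbd k) i)
          (Eventually.of_forall fun ω => Finset.sum_nonneg fun i _ => hk0 k _)]
        refine ENNReal.ofReal_le_ofReal ?_
        rw [expectation_gen hBMC q (hkmeas k) (hkbd k)]
        refine mul_le_mul_of_nonneg_left ?_ (by positivity)
        obtain ⟨hq0, hqle⟩ := sandwich hF (hk0 k) (hkle k) hhF q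
        exact integral_mono_of_nonneg (Eventually.of_forall hq0)
          (hF.int_nu _ (Qiter_mem hF hhF q)) (Eventually.of_forall hqle)

end Helpers


/-- **Lemma (sub-critical: the remainder `R₁` vanishes in `L²`).** -/
theorem subcritical_R1
    {S : Type*} [MeasurableSpace S] {Ω : Type*} [MeasurableSpace Ω]
    (P : Kernel S (S × S)) [IsMarkovKernel P]
    (ν : Measure S) [IsProbabilityMeasure ν]
    (m : Measure Ω) [IsProbabilityMeasure m]
    (X : List Bool → Ω → S) (hBMC : IsBMC P ν m X)
    (F : Set (S → ℝ)) (hF : AssumpF P ν F)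
    (μ : Measure S) (α : ℝ) (hα0 : 0 < α) (hα1 : α < 1 / Real.sqrt 2)
    (hH2 : AssumpH2 P F μ α)
    (𝔣 : ℕ → S → ℝ) (h𝔣 : ∀ ℓ, 𝔣 ℓ ∈ F)
    (g : S → ℝ) (hg : g ∈ F) (hunif : UnifH2 P μ α 𝔣 g)
    (p : ℕ → ℕ) (hp_mono : Monotone p) (hp_pos : ∀ n, 1 ≤ p n)
    (hp_lt : ∀ᶠ n in atTop, p n < n)
    (hp_ratio : Tendsto (fun n => (p n : ℝ) / n) atTop (𝓝 1))
    (hp_log : ∀ lam : ℝ, 0 < lam →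
      Tendsto (fun n : ℕ => (n : ℝ) - p n - lam * Real.log n) atTop atTop) :
    Tendsto (fun n => ∫ ω,
        ((Real.sqrt (2 ^ n))⁻¹ *
          ∑ ℓ ∈ Finset.range (p n + 1), (2 : ℝ) ^ (p n - ℓ) *
            MA X (gen (n - p n)) (Qiter P (p n - ℓ) (ctr μ (𝔣 ℓ))) ω) ^ 2 ∂m)
      atTop (𝓝 0) := by
  classical
  -- basic facts
  have hs2 : (1:ℝ) < Real.sqrt 2 := by
    rw [show (1:ℝ) = Real.sqrt 1 by simp]
    exact Real.sqrt_lt_sqrt (by norm_num) (by norm_num)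
  have hα1' : α < 1 := lt_trans hα1 (by rw [div_lt_one (by linarith)]; exact hs2)
  have hg0 : ∀ x, 0 ≤ g x := fun x => le_trans (abs_nonneg _) ((hunif 0 0 x).1)
  -- the dominating function for g²
  obtain ⟨g₂, hg₂F, hg₂⟩ := hH2.erg _ (hF.sq_mem g hg)
  have hg₂0 : ∀ x, 0 ≤ g₂ x := by
    intro x
    have h1 := hg₂ 0 x
    have h2 := abs_nonneg (Qiter P 0 (fun x => g x ^ 2) x - mInt μ (fun x => g x ^ 2))
    simp only [pow_zero, one_mul] at h1
    linarith
  set C : ℝ := mInt μ (fun x => g x ^ 2) + ∫ x, g₂ x ∂ν with hCdef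
  have hmint0 : 0 ≤ mInt μ (fun x => g x ^ 2) := integral_nonneg fun x => sq_nonneg _
  have hC0 : 0 ≤ C := add_nonneg hmint0 (integral_nonneg hg₂0)
  have hQC : ∀ q : ℕ, ∫ x, Qiter P q (fun x => g x ^ 2) x ∂ν ≤ C := by
    intro q
    have hpt : ∀ x, Qiter P q (fun x => g x ^ 2) x ≤ mInt μ (fun x => g x ^ 2) + g₂ x := by
      intro x
      have h1 := hg₂ q x
      rw [abs_le] at h1
      have h2 : α ^ q * g₂ x ≤ g₂ x := by
        have hq1 : α ^ q ≤ 1 := pow_le_one₀ hα0.le hα1'.le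
        nlinarith [hg₂0 x]
      linarith [h1.2]
    calc ∫ x, Qiter P q (fun x => g x ^ 2) x ∂ν
        ≤ ∫ x, (mInt μ (fun x => g x ^ 2) + g₂ x) ∂ν :=
          integral_mono (hF.int_nu _ (Qiter_mem hF (hF.sq_mem g hg) q))
            ((integrable_const _).add (hF.int_nu _ hg₂F)) hpt
      _ = C := by
          rw [integral_add (integrable_const _) (hF.int_nu _ hg₂F), integral_const]
          simp [hCdef]
  have hlin : ∀ q : ℕ, ∫⁻ ω, ENNReal.ofReal (∑ i ∈ gen q, g (X i ω) ^ 2) ∂m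
      ≤ ENNReal.ofReal (2 ^ q * C) := by
    intro q
    refine (lintegral_gen_le hBMC hF (hF.sq_mem g hg) (fun x => sq_nonneg _) q).trans
      (ENNReal.ofReal_le_ofReal ?_)
    exact mul_le_mul_of_nonneg_left (hQC q) (by positivity)
  -- the remainder and its pointwise bound
  set R : ℕ → Ω → ℝ := fun n ω => (Real.sqrt (2 ^ n))⁻¹ *
      ∑ ℓ ∈ Finset.range (p n + 1), (2 : ℝ) ^ (p n - ℓ) *
        MA X (gen (n - p n)) (Qiter P (p n - ℓ) (ctr μ (𝔣 ℓ))) ω with hRdef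
  show Tendsto (fun n => ∫ ω, R n ω ^ 2 ∂m) atTop (𝓝 0)
  set T : ℕ → ℝ := fun n => ((p n : ℝ) + 1) * (1 + (2 * α) ^ p n) with hTdef
  have hT0 : ∀ n, 0 ≤ T n := fun n => by positivity
  have hinner : ∀ (n : ℕ) (x : S),
      |∑ ℓ ∈ Finset.range (p n + 1), (2 : ℝ) ^ (p n - ℓ) *
        Qiter P (p n - ℓ) (ctr μ (𝔣 ℓ)) x| ≤ T n * g x := by
    intro n x
    calc |∑ ℓ ∈ Finset.range (p n + 1), (2 : ℝ) ^ (p n - ℓ) *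
          Qiter P (p n - ℓ) (ctr μ (𝔣 ℓ)) x|
        ≤ ∑ ℓ ∈ Finset.range (p n + 1),
            |(2 : ℝ) ^ (p n - ℓ) * Qiter P (p n - ℓ) (ctr μ (𝔣 ℓ)) x| :=
          Finset.abs_sum_le_sum_abs _ _
      _ ≤ ∑ _ℓ ∈ Finset.range (p n + 1), (1 + (2 * α) ^ p n) * g x := by
          refine Finset.sum_le_sum fun ℓ _ => ?_
          rw [abs_mul, abs_pow, abs_two]
          simp only [Qiter_ctr hF (h𝔣 ℓ)]
          have h1 := (hunif (p n - ℓ) ℓ x).2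
          have h2 : (2:ℝ) ^ (p n - ℓ) * |Qiter P (p n - ℓ) (𝔣 ℓ) x - mInt μ (𝔣 ℓ)|
              ≤ (2 * α) ^ (p n - ℓ) * g x := by
            rw [mul_pow]
            calc (2:ℝ) ^ (p n - ℓ) * |Qiter P (p n - ℓ) (𝔣 ℓ) x - mInt μ (𝔣 ℓ)|
                ≤ (2:ℝ) ^ (p n - ℓ) * (α ^ (p n - ℓ) * g x) :=
                  mul_le_mul_of_nonneg_left h1 (by positivity)
              _ = 2 ^ (p n - ℓ) * α ^ (p n - ℓ) * g x := by ring
          refine h2.trans (mul_le_mul_of_nonneg_right ?_ (hg0 x))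
          rcases le_or_gt (2 * α) 1 with hle | hgt
          · have ha : (2 * α) ^ (p n - ℓ) ≤ 1 := pow_le_one₀ (by positivity) hle
            have hb : (0:ℝ) ≤ (2 * α) ^ p n := by positivity
            linarith
          · have ha : (2 * α) ^ (p n - ℓ) ≤ (2 * α) ^ p n :=
              pow_le_pow_right₀ hgt.le (Nat.sub_le _ _)
            linarith
      _ = T n * g x := by
          rw [Finset.sum_const, Finset.card_range, nsmul_eq_mul, hTdef]
          push_cast
          ring
  have hRb : ∀ (n : ℕ) (ω : Ω), R n ω ^ 2 ≤
      ((2:ℝ) ^ n)⁻¹ * T n ^ 2 * 2 ^ (n - p n) * ∑ i ∈ gen (n - p n), g (X i ω) ^ 2 := by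
    intro n ω
    have hswap : ∑ ℓ ∈ Finset.range (p n + 1), (2 : ℝ) ^ (p n - ℓ) *
        MA X (gen (n - p n)) (Qiter P (p n - ℓ) (ctr μ (𝔣 ℓ))) ω
        = ∑ i ∈ gen (n - p n), ∑ ℓ ∈ Finset.range (p n + 1),
            (2 : ℝ) ^ (p n - ℓ) * Qiter P (p n - ℓ) (ctr μ (𝔣 ℓ)) (X i ω) := by
      simp_rw [MA, Finset.mul_sum]
      exact Finset.sum_comm
    have habs : |R n ω| ≤ (Real.sqrt (2 ^ n))⁻¹ *
        (T n * ∑ i ∈ gen (n - p n), g (X i ω)) := by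
      rw [hRdef]
      simp only
      rw [abs_mul, abs_inv, abs_of_nonneg (Real.sqrt_nonneg _), hswap]
      refine mul_le_mul_of_nonneg_left ?_ (by positivity)
      calc |∑ i ∈ gen (n - p n), ∑ ℓ ∈ Finset.range (p n + 1),
            (2 : ℝ) ^ (p n - ℓ) * Qiter P (p n - ℓ) (ctr μ (𝔣 ℓ)) (X i ω)|
          ≤ ∑ i ∈ gen (n - p n), |∑ ℓ ∈ Finset.range (p n + 1),
            (2 : ℝ) ^ (p n - ℓ) * Qiter P (p n - ℓ) (ctr μ (𝔣 ℓ)) (X i ω)| :=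
            Finset.abs_sum_le_sum_abs _ _
        _ ≤ ∑ i ∈ gen (n - p n), T n * g (X i ω) :=
            Finset.sum_le_sum fun i _ => hinner n (X i ω)
        _ = T n * ∑ i ∈ gen (n - p n), g (X i ω) := by rw [Finset.mul_sum]
    have hsq : R n ω ^ 2 ≤ ((Real.sqrt (2 ^ n))⁻¹ *
        (T n * ∑ i ∈ gen (n - p n), g (X i ω))) ^ 2 := by
      rw [← sq_abs]
      exact pow_le_pow_left₀ (abs_nonneg _) habs 2
    have hsqrt : ((Real.sqrt (2 ^ n))⁻¹) ^ 2 = ((2:ℝ) ^ n)⁻¹ := by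
      rw [inv_pow, Real.sq_sqrt (by positivity)]
    have hCS : (∑ i ∈ gen (n - p n), g (X i ω)) ^ 2
        ≤ 2 ^ (n - p n) * ∑ i ∈ gen (n - p n), g (X i ω) ^ 2 := by
      refine (sq_sum_le_card_mul_sum_sq).trans ?_
      refine mul_le_mul_of_nonneg_right ?_
        (Finset.sum_nonneg fun i _ => sq_nonneg _)
      exact_mod_cast Nat.cast_le.2 (card_gen_le (n - p n))
    calc R n ω ^ 2
        ≤ ((Real.sqrt (2 ^ n))⁻¹ * (T n * ∑ i ∈ gen (n - p n), g (X i ω))) ^ 2 := hsq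
      _ = ((Real.sqrt (2 ^ n))⁻¹) ^ 2 *
            (T n ^ 2 * (∑ i ∈ gen (n - p n), g (X i ω)) ^ 2) := by ring
      _ = ((2:ℝ) ^ n)⁻¹ * (T n ^ 2 * (∑ i ∈ gen (n - p n), g (X i ω)) ^ 2) := by
          rw [hsqrt]
      _ ≤ ((2:ℝ) ^ n)⁻¹ * (T n ^ 2 *
            (2 ^ (n - p n) * ∑ i ∈ gen (n - p n), g (X i ω) ^ 2)) := by
          exact mul_le_mul_of_nonneg_left
            (mul_le_mul_of_nonneg_left hCS (by positivity)) (by positivity)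
      _ = ((2:ℝ) ^ n)⁻¹ * T n ^ 2 * 2 ^ (n - p n) *
            ∑ i ∈ gen (n - p n), g (X i ω) ^ 2 := by ring
  -- measurability of R n
  have hmeasR : ∀ n, Measurable (R n) := by
    intro n
    have h1 : Measurable fun ω => ∑ ℓ ∈ Finset.range (p n + 1), (2:ℝ) ^ (p n - ℓ) *
        MA X (gen (n - p n)) (Qiter P (p n - ℓ) (ctr μ (𝔣 ℓ))) ω := by
      refine Finset.measurable_sum _ fun ℓ _ => Measurable.const_mul ?_ _
      exact Finset.measurable_sum _ fun i _ =>
        (hF.meas _ (Qiter_mem hF (ctr_mem hF (h𝔣 ℓ)) _)).comp (hBMC.meas i)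
    exact h1.const_mul _
  -- the integral bound
  have hIb : ∀ n, ∫ ω, R n ω ^ 2 ∂m
      ≤ ((2:ℝ) ^ n)⁻¹ * T n ^ 2 * 2 ^ (n - p n) * (2 ^ (n - p n) * C) := by
    intro n
    rw [integral_eq_lintegral_of_nonneg_ae (Eventually.of_forall fun ω => sq_nonneg _)
      ((hmeasR n).pow_const 2).aestronglyMeasurable]
    have hcn0 : (0:ℝ) ≤ ((2:ℝ) ^ n)⁻¹ * T n ^ 2 * 2 ^ (n - p n) := by positivity
    have hstep : ∫⁻ ω, ENNReal.ofReal (R n ω ^ 2) ∂m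
        ≤ ENNReal.ofReal (((2:ℝ) ^ n)⁻¹ * T n ^ 2 * 2 ^ (n - p n) * (2 ^ (n - p n) * C)) := by
      calc ∫⁻ ω, ENNReal.ofReal (R n ω ^ 2) ∂m
          ≤ ∫⁻ ω, ENNReal.ofReal (((2:ℝ) ^ n)⁻¹ * T n ^ 2 * 2 ^ (n - p n)) *
              ENNReal.ofReal (∑ i ∈ gen (n - p n), g (X i ω) ^ 2) ∂m := by
            refine lintegral_mono fun ω => ?_
            rw [← ENNReal.ofReal_mul hcn0]
            exact ENNReal.ofReal_le_ofReal (hRb n ω)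
        _ = ENNReal.ofReal (((2:ℝ) ^ n)⁻¹ * T n ^ 2 * 2 ^ (n - p n)) *
              ∫⁻ ω, ENNReal.ofReal (∑ i ∈ gen (n - p n), g (X i ω) ^ 2) ∂m :=
            lintegral_const_mul' _ _ ENNReal.ofReal_ne_top
        _ ≤ ENNReal.ofReal (((2:ℝ) ^ n)⁻¹ * T n ^ 2 * 2 ^ (n - p n)) *
              ENNReal.ofReal (2 ^ (n - p n) * C) := mul_le_mul_right (hlin (n - p n)) _
        _ = ENNReal.ofReal (((2:ℝ) ^ n)⁻¹ * T n ^ 2 * 2 ^ (n - p n) *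
              (2 ^ (n - p n) * C)) := (ENNReal.ofReal_mul hcn0).symm
    exact ENNReal.toReal_le_of_le_ofReal
      (mul_nonneg hcn0 (mul_nonneg (by positivity) hC0)) hstep
  -- choice of constants
  have hlog2 : (0:ℝ) < Real.log 2 := Real.log_pos one_lt_two
  have hlogα : Real.log α < -(Real.log 2) / 2 := by
    have h1 : Real.log α < Real.log (1 / Real.sqrt 2) := Real.log_lt_log hα0 hα1
    rw [one_div, Real.log_inv, Real.log_sqrt (by norm_num)] at h1
    linarith
  have hlogα0 : Real.log α < 0 := by linarith
  set L : ℝ := -Real.log α with hLdef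
  have hL0 : 0 < L := by rw [hLdef]; linarith
  have hL2 : Real.log 2 < 2 * L := by rw [hLdef]; linarith
  set c₁ : ℝ := Real.log 2 / (2 * L) with hc₁def
  have hc₁0 : 0 < c₁ := by positivity
  have hc₁1 : c₁ < 1 := (div_lt_one (by linarith)).2 hL2
  set c : ℝ := max (3/4) ((c₁ + 1) / 2) with hcdef
  have hc34 : (3/4 : ℝ) ≤ c := le_max_left _ _
  have hc1 : c < 1 := max_lt (by norm_num) (by linarith)
  have hcc₁ : c₁ < c := lt_of_lt_of_le (by linarith) (le_max_right _ _)
  have hα2pos : (0:ℝ) < α ^ 2 := by positivity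
  have hα2lt1 : α ^ 2 < 1 := by nlinarith
  have hr2' : (α ^ 2 : ℝ) ^ (c₁ : ℝ) = 1 / 2 := by
    rw [Real.rpow_def_of_pos hα2pos]
    have hlga : Real.log (α ^ 2) = 2 * Real.log α := by
      rw [Real.log_pow]; push_cast; ring
    rw [hlga]
    have he : 2 * Real.log α * c₁ = -Real.log 2 := by
      have hne : Real.log α ≠ 0 := ne_of_lt hlogα0
      rw [hc₁def, hLdef]
      field_simp
    rw [he, Real.exp_neg, Real.exp_log (by norm_num : (0:ℝ) < 2)]
    norm_num
  set r₂ : ℝ := 2 * (α ^ 2) ^ (c : ℝ) with hr₂def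
  have hr₂0 : 0 < r₂ := by
    have := Real.rpow_pos_of_pos hα2pos c
    rw [hr₂def]; linarith
  have hr₂1 : r₂ < 1 := by
    have h1 := Real.rpow_lt_rpow_of_exponent_gt hα2pos hα2lt1 hcc₁
    rw [hr2'] at h1
    rw [hr₂def]; linarith
  set r₁ : ℝ := (2:ℝ) ^ (1 - 2 * c) with hr₁def
  have hr₁0 : 0 < r₁ := Real.rpow_pos_of_pos two_pos _
  have hr₁1 : r₁ < 1 :=
    Real.rpow_lt_one_of_one_lt_of_neg one_lt_two (by linarith)
  -- numeric estimate
  have hnum : ∀ n : ℕ, 1 ≤ n → p n < n → c * (n:ℝ) ≤ (p n : ℝ) →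
      ((2:ℝ) ^ n)⁻¹ * T n ^ 2 * 2 ^ (n - p n) * (2 ^ (n - p n) * C)
        ≤ 8 * C * (n:ℝ) ^ 2 * r₁ ^ n + 8 * C * (n:ℝ) ^ 2 * r₂ ^ n := by
    intro n hn1 hlt hcn
    set q : ℕ := n - p n with hq
    set y : ℝ := (2 * α) ^ p n with hy
    have hy0 : (0:ℝ) ≤ y := by rw [hy]; positivity
    have hnq : q + p n = n := by rw [hq]; omega
    have h2pn : ((2:ℝ) ^ p n) ≠ 0 := by positivity
    have h2n : (2:ℝ) ^ n = 2 ^ q * 2 ^ p n := by rw [← pow_add, hnq]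
    have hT : T n ≤ 2 * (n:ℝ) * (1 + y) := by
      rw [hTdef]
      simp only
      have ha : (p n : ℝ) + 1 ≤ 2 * n := by
        have hb : (p n : ℝ) + 1 ≤ n := by exact_mod_cast Nat.succ_le_of_lt hlt
        have hc' : (1:ℝ) ≤ n := by exact_mod_cast hn1
        linarith
      rw [← hy]
      exact mul_le_mul_of_nonneg_right ha (by positivity)
    have hTsq : T n ^ 2 ≤ 8 * (n:ℝ) ^ 2 * (1 + y ^ 2) := by
      have h1 : T n ^ 2 ≤ (2 * (n:ℝ) * (1 + y)) ^ 2 := pow_le_pow_left₀ (hT0 n) hT 2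
      have h2 : (2 * (n:ℝ) * (1 + y)) ^ 2 ≤ 8 * (n:ℝ) ^ 2 * (1 + y ^ 2) := by
        nlinarith [sq_nonneg ((n:ℝ) * (1 - y)), sq_nonneg (n:ℝ), hy0]
      linarith
    have hbn : ((2:ℝ) ^ n)⁻¹ * T n ^ 2 * 2 ^ q * (2 ^ q * C)
        = T n ^ 2 * C * ((2:ℝ) ^ q / 2 ^ p n) := by
      rw [h2n]; field_simp
    have hqr : (q:ℝ) = (n:ℝ) - (p n : ℝ) := by
      rw [hq]; push_cast [Nat.cast_sub hlt.le]; ring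
    have hA0 : (0:ℝ) ≤ (2:ℝ) ^ q / 2 ^ p n := by positivity
    have hAr : (2:ℝ) ^ q / 2 ^ p n ≤ r₁ ^ n := by
      have e2 : (2:ℝ) ^ q / 2 ^ p n = (2:ℝ) ^ ((q:ℝ) - (p n : ℝ)) := by
        rw [Real.rpow_sub two_pos, Real.rpow_natCast, Real.rpow_natCast]
      have e3 : r₁ ^ n = (2:ℝ) ^ ((1 - 2 * c) * (n:ℝ)) := by
        rw [hr₁def, ← Real.rpow_natCast ((2:ℝ) ^ (1 - 2*c)) n,
          ← Real.rpow_mul (by norm_num : (0:ℝ) ≤ 2)]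
      rw [e2, e3]
      refine Real.rpow_le_rpow_of_exponent_le one_le_two ?_
      rw [hqr]
      nlinarith [hcn]
    have hBr : (α ^ 2) ^ p n * (2:ℝ) ^ n ≤ r₂ ^ n := by
      have e4 : (α ^ 2 : ℝ) ^ p n ≤ ((α ^ 2) ^ (c:ℝ)) ^ n := by
        calc (α ^ 2 : ℝ) ^ p n = (α ^ 2) ^ ((p n : ℕ) : ℝ) :=
              (Real.rpow_natCast _ _).symm
          _ ≤ (α ^ 2) ^ (c * (n:ℝ)) :=
              Real.rpow_le_rpow_of_exponent_ge hα2pos hα2lt1.le hcn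
          _ = ((α ^ 2) ^ (c:ℝ)) ^ n := by
              rw [Real.rpow_mul hα2pos.le, Real.rpow_natCast]
      calc (α ^ 2) ^ p n * (2:ℝ) ^ n ≤ ((α ^ 2) ^ (c:ℝ)) ^ n * 2 ^ n :=
            mul_le_mul_of_nonneg_right e4 (by positivity)
        _ = r₂ ^ n := by rw [hr₂def, mul_pow]; ring
    have hB2 : y ^ 2 * ((2:ℝ) ^ q / 2 ^ p n) = (α ^ 2) ^ p n * 2 ^ n := by
      have e1 : y ^ 2 = ((2 * α) ^ 2) ^ p n := by
        rw [hy, ← pow_mul, ← pow_mul, Nat.mul_comm]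
      have e2 : ((2:ℝ) * α) ^ 2 = 2 * 2 * α ^ 2 := by ring
      rw [e1, e2, mul_pow, mul_pow, h2n]
      field_simp
    have h8C : (0:ℝ) ≤ 8 * C * (n:ℝ) ^ 2 := by
      have := sq_nonneg (n:ℝ); nlinarith
    rw [hbn]
    calc T n ^ 2 * C * ((2:ℝ) ^ q / 2 ^ p n)
        ≤ (8 * (n:ℝ) ^ 2 * (1 + y ^ 2)) * C * ((2:ℝ) ^ q / 2 ^ p n) :=
          mul_le_mul_of_nonneg_right (mul_le_mul_of_nonneg_right hTsq hC0) hA0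
      _ = 8 * C * (n:ℝ) ^ 2 * ((2:ℝ) ^ q / 2 ^ p n)
          + 8 * C * (n:ℝ) ^ 2 * (y ^ 2 * ((2:ℝ) ^ q / 2 ^ p n)) := by ring
      _ ≤ 8 * C * (n:ℝ) ^ 2 * r₁ ^ n + 8 * C * (n:ℝ) ^ 2 * r₂ ^ n := by
          refine add_le_add (mul_le_mul_of_nonneg_left hAr h8C) ?_
          rw [hB2]
          exact mul_le_mul_of_nonneg_left hBr h8C
  -- the limit of the bound
  have hΦ : Tendsto (fun n : ℕ => 8 * C * (n:ℝ) ^ 2 * r₁ ^ n + 8 * C * (n:ℝ) ^ 2 * r₂ ^ n)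
      atTop (𝓝 0) := by
    have t1 : Tendsto (fun n : ℕ => (n:ℝ) ^ 2 * r₁ ^ n) atTop (𝓝 0) :=
      (summable_pow_mul_geometric_of_norm_lt_one (R := ℝ) 2 (r := r₁)
        (by rw [Real.norm_eq_abs, abs_of_pos hr₁0]; exact hr₁1)).tendsto_atTop_zero
    have t2 : Tendsto (fun n : ℕ => (n:ℝ) ^ 2 * r₂ ^ n) atTop (𝓝 0) :=
      (summable_pow_mul_geometric_of_norm_lt_one (R := ℝ) 2 (r := r₂)
        (by rw [Real.norm_eq_abs, abs_of_pos hr₂0]; exact hr₂1)).tendsto_atTop_zero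
    have := (t1.const_mul (8 * C)).add (t2.const_mul (8 * C))
    simp only [mul_zero, add_zero] at this
    refine this.congr fun n => ?_
    ring
  -- eventual inequality and squeeze
  have hev : ∀ᶠ n : ℕ in atTop, c * (n:ℝ) ≤ (p n : ℝ) ∧ 1 ≤ n ∧ p n < n := by
    have h1 : ∀ᶠ n : ℕ in atTop, c < (p n : ℝ) / (n:ℝ) :=
      hp_ratio.eventually (eventually_gt_nhds hc1)
    filter_upwards [h1, eventually_ge_atTop 1, hp_lt] with n ha hb hc'
    have hn0 : (0:ℝ) < n := by exact_mod_cast hb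
    exact ⟨le_of_lt ((lt_div_iff₀ hn0).1 ha), hb, hc'⟩
  refine tendsto_of_tendsto_of_tendsto_of_le_of_le' tendsto_const_nhds hΦ ?_ ?_
  · exact Eventually.of_forall fun n => integral_nonneg fun ω => sq_nonneg _
  · filter_upwards [hev] with n hn
    obtain ⟨h1, h2, h3⟩ := hn
    exact (hIb n).trans (hnum n h2 h3 h1)


end BMC
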